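/- There exists no monic degree 5 hyperbolic polynomial with coefficient signs (+,+,+,−,−,+) (sign pattern Σ_{3,2,1}) whose root moduli satisfy β < γ_1 < γ_2 < γ_3 < α, where β < α are the moduli of the two positive roots and γ_1 < γ_2 < γ_3 are the moduli of the three negative roots. -/
import Mathlib


open Polynomial

/-- The coefficient of `X^3` in the quintic, in terms of the roots. -/
lemma coeff3_eq (a b g1 g2 g3 : ℝ) :
    ((X - C a) * (X - C b) * (X + C g1) * (X + C g2) * (X + C g3) : Polynomial ℝ).coeff 3
      = a*b - (a+b)*(g1+g2+g3) + (g1*g2+g1*g3+g2*g3) := by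
  have hp : ((X - C a) * (X - C b) * (X + C g1) * (X + C g2) * (X + C g3) : Polynomial ℝ)
      = X^5 + C (g1+g2+g3-a-b) * X^4
        + C (a*b - (a+b)*(g1+g2+g3) + (g1*g2+g1*g3+g2*g3)) * X^3
        + C (a*b*(g1+g2+g3) - (a+b)*(g1*g2+g1*g3+g2*g3) + g1*g2*g3) * X^2
        + C (a*b*(g1*g2+g1*g3+g2*g3) - (a+b)*(g1*g2*g3)) * X
        + C (a*b*g1*g2*g3) := by
    simp only [C_add, C_sub, C_mul]; ring
  rw [hp]
  simp only [coeff_add, coeff_C_mul, coeff_X_pow, coeff_C, coeff_X]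
  norm_num

/-- Under the modulus ordering, the `X^3` coefficient is automatically negative. -/
lemma coeff3_neg (a b g1 g2 g3 : ℝ) (hb : 0 < b) (h1 : b < g1) (h2 : g1 < g2)
    (h3 : g2 < g3) (ha : g3 < a) :
    a*b - (a+b)*(g1+g2+g3) + (g1*g2+g1*g3+g2*g3) < 0 := by
  nlinarith [mul_pos (sub_pos.2 ha) (sub_pos.2 h1), mul_pos (sub_pos.2 h3) (sub_pos.2 h2),
    mul_pos (sub_pos.2 ha) (sub_pos.2 h3), mul_pos (sub_pos.2 h2) (sub_pos.2 h1),
    mul_pos hb (sub_pos.2 h1), mul_pos (sub_pos.2 ha) (sub_pos.2 h2)]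

/-- There is no monic degree-5 hyperbolic polynomial with coefficient
signs `+,+,+,-,-,+` (sign pattern `Σ_{3,2,1}`) whose root moduli satisfy
`β < γ₁ < γ₂ < γ₃ < α`, where `β < α` are the moduli of the two positive roots and
`γ₁ < γ₂ < γ₃` the moduli of the three negative roots. -/
theorem stmt17 :
    ¬ ∃ α β γ₁ γ₂ γ₃ : ℝ,
      0 < β ∧ β < γ₁ ∧ γ₁ < γ₂ ∧ γ₂ < γ₃ ∧ γ₃ < α ∧
      (0 < ((X - C α) * (X - C β) * (X + C γ₁) * (X + C γ₂) * (X + C γ₃) :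
        Polynomial ℝ).coeff 4) ∧
      (0 < ((X - C α) * (X - C β) * (X + C γ₁) * (X + C γ₂) * (X + C γ₃) :
        Polynomial ℝ).coeff 3) ∧
      (((X - C α) * (X - C β) * (X + C γ₁) * (X + C γ₂) * (X + C γ₃) :
        Polynomial ℝ).coeff 2 < 0) ∧
      (((X - C α) * (X - C β) * (X + C γ₁) * (X + C γ₂) * (X + C γ₃) :
        Polynomial ℝ).coeff 1 < 0) ∧
      (0 < ((X - C α) * (X - C β) * (X + C γ₁) * (X + C γ₂) * (X + C γ₃) :
        Polynomial ℝ).coeff 0) := by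
  rintro ⟨a, b, g1, g2, g3, hb, h1, h2, h3, ha, -, hc3, -, -, -⟩
  rw [coeff3_eq] at hc3
  exact absurd hc3 (not_lt.2 (coeff3_neg a b g1 g2 g3 hb h1 h2 h3 ha).le)
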